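/- arXiv:2404.09796 — 10 statements merged into one kernel-verified Lean document; each statement's English description precedes it below -/
import Mathlib

section
/- Let σ > 1 and φ ∈ (0,1). The function f is strictly increasing on the interval [φ^{1/σ}, φ^{−1/σ}] and maps this interval bijectively onto [0,1]. Consequently there exists a unique strictly increasing function w : [0,1] → [φ^{1/σ}, φ^{−1/σ}] such that f(w(h)) = h for every h ∈ [0,1] (the short-run equilibrium relative nominal wage, which is strictly increasing in the population share h of region L). -/
open Set


/-- The short-run wage-equation function of the two-region model:
`f σ φ w = (w^σ − φ)/((w^σ − φ) + w·(w^{−σ} − φ))`, with real powers. -/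
noncomputable def wageEq (σ φ w : ℝ) : ℝ :=
  (w ^ σ - φ) / ((w ^ σ - φ) + w * (w ^ (-σ) - φ))

/-- for `σ > 1` and `φ ∈ (0,1)`, the wage-equation function `f` is strictly
increasing on `[φ^{1/σ}, φ^{−1/σ}]` and maps this interval bijectively onto `[0,1]`;
consequently there is a unique strictly increasing `w : [0,1] → [φ^{1/σ}, φ^{−1/σ}]`
with `f(w(h)) = h` for all `h ∈ [0,1]`. -/
theorem stmt_3 (σ φ : ℝ) (hσ : 1 < σ) (hφ : φ ∈ Set.Ioo (0 : ℝ) 1) :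
    StrictMonoOn (wageEq σ φ) (Set.Icc (φ ^ (1 / σ)) (φ ^ (-(1 / σ)))) ∧
    Set.BijOn (wageEq σ φ) (Set.Icc (φ ^ (1 / σ)) (φ ^ (-(1 / σ)))) (Set.Icc 0 1) ∧
    ∃! w : Set.Icc (0 : ℝ) 1 → ℝ,
      StrictMono w ∧
      ∀ h : Set.Icc (0 : ℝ) 1,
        w h ∈ Set.Icc (φ ^ (1 / σ)) (φ ^ (-(1 / σ))) ∧ wageEq σ φ (w h) = (h : ℝ) := by
  obtain ⟨hφ0, hφ1⟩ := hφ
  have hσ0 : 0 < σ := lt_trans one_pos hσ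
  set a := φ ^ (1 / σ) with ha_def
  set b := φ ^ (-(1 / σ)) with hb_def
  have ha0 : 0 < a := Real.rpow_pos_of_pos hφ0 _
  have hb0 : 0 < b := Real.rpow_pos_of_pos hφ0 _
  have haσ : a ^ σ = φ := by
    rw [ha_def, ← Real.rpow_mul hφ0.le, one_div_mul_cancel hσ0.ne', Real.rpow_one]
  have hbσ : b ^ σ = φ⁻¹ := by
    rw [hb_def, ← Real.rpow_mul hφ0.le, neg_mul, one_div_mul_cancel hσ0.ne',
      Real.rpow_neg_one]
  have hbnσ : b ^ (-σ) = φ := by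
    rw [Real.rpow_neg hb0.le, hbσ, inv_inv]
  have ha1 : a < 1 := Real.rpow_lt_one hφ0.le hφ1 (by positivity)
  have hb1 : 1 < b := by
    rw [hb_def, Real.one_lt_rpow_iff_of_pos hφ0]
    exact Or.inr ⟨hφ1, neg_lt_zero.mpr (by positivity)⟩
  have hab : a < b := ha1.trans hb1
  have hφinv : 1 < φ⁻¹ := (one_lt_inv₀ hφ0).2 hφ1
  -- basic bounds on the interval
  have hxpos : ∀ x : ℝ, a ≤ x → 0 < x := fun x hx => lt_of_lt_of_le ha0 hx
  have hAge : ∀ x : ℝ, a ≤ x → φ ≤ x ^ σ := by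
    intro x hx
    calc φ = a ^ σ := haσ.symm
      _ ≤ x ^ σ := Real.rpow_le_rpow ha0.le hx hσ0.le
  have hAgt : ∀ x : ℝ, a < x → φ < x ^ σ := by
    intro x hx
    calc φ = a ^ σ := haσ.symm
      _ < x ^ σ := Real.rpow_lt_rpow ha0.le hx hσ0
  have hBge : ∀ x : ℝ, 0 < x → x ≤ b → φ ≤ x ^ (-σ) := by
    intro x hx0 hxb
    have h1 : x ^ σ ≤ φ⁻¹ := hbσ ▸ Real.rpow_le_rpow hx0.le hxb hσ0.le
    have h2 : 0 < x ^ σ := Real.rpow_pos_of_pos hx0 σ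
    rw [Real.rpow_neg hx0.le]
    rw [le_inv_comm₀ hφ0 h2]
    exact h1
  have hBgt : ∀ x : ℝ, 0 < x → x < b → φ < x ^ (-σ) := by
    intro x hx0 hxb
    have h1 : x ^ σ < φ⁻¹ := hbσ ▸ Real.rpow_lt_rpow hx0.le hxb hσ0
    have h2 : 0 < x ^ σ := Real.rpow_pos_of_pos hx0 σ
    rw [Real.rpow_neg hx0.le]
    rw [lt_inv_comm₀ hφ0 h2]
    exact h1
  -- denominator positive on the interval
  have hD : ∀ x ∈ Icc a b, 0 < (x ^ σ - φ) + x * (x ^ (-σ) - φ) := by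
    rintro x ⟨hax, hxb⟩
    have hx0 : 0 < x := hxpos x hax
    rcases lt_or_eq_of_le hxb with h | h
    · have hM : 0 < x * (x ^ (-σ) - φ) :=
        mul_pos hx0 (sub_pos.mpr (hBgt x hx0 h))
      have hN : 0 ≤ x ^ σ - φ := sub_nonneg.mpr (hAge x hax)
      linarith
    · subst h
      rw [hbσ, hbnσ]
      have : (0:ℝ) < φ⁻¹ - φ := by linarith
      nlinarith
  -- continuity
  have hcont : ContinuousOn (wageEq σ φ) (Icc a b) := by
    intro x hx
    have hx0 : 0 < x := hxpos x hx.1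
    have c1 : ContinuousAt (fun w : ℝ => w ^ σ - φ) x :=
      (Real.continuousAt_rpow_const x σ (Or.inl hx0.ne')).sub continuousAt_const
    have c2 : ContinuousAt (fun w : ℝ => (w ^ σ - φ) + w * (w ^ (-σ) - φ)) x :=
      c1.add (continuousAt_id.mul
        ((Real.continuousAt_rpow_const x (-σ) (Or.inl hx0.ne')).sub continuousAt_const))
    exact (c1.div c2 (hD x hx).ne').continuousWithinAt
  -- strict monotonicity via derivative
  have hsm : StrictMonoOn (wageEq σ φ) (Icc a b) := by
    apply strictMonoOn_of_deriv_pos (convex_Icc a b) hcont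
    rw [interior_Icc]
    rintro x ⟨hax, hxb⟩
    have hx0 : 0 < x := ha0.trans hax
    have hNd : HasDerivAt (fun w : ℝ => w ^ σ - φ) (σ * x ^ (σ - 1)) x :=
      (Real.hasDerivAt_rpow_const (Or.inl hx0.ne')).sub_const φ
    have hMd : HasDerivAt (fun w : ℝ => w * (w ^ (-σ) - φ))
        (1 * (x ^ (-σ) - φ) + x * (-σ * x ^ (-σ - 1))) x :=
      (hasDerivAt_id x).mul
        ((Real.hasDerivAt_rpow_const (Or.inl hx0.ne')).sub_const φ)
    have hDd : HasDerivAt (fun w : ℝ => (w ^ σ - φ) + w * (w ^ (-σ) - φ))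
        (σ * x ^ (σ - 1) + (1 * (x ^ (-σ) - φ) + x * (-σ * x ^ (-σ - 1)))) x :=
      hNd.add hMd
    have hDne : (x ^ σ - φ) + x * (x ^ (-σ) - φ) ≠ 0 :=
      (hD x ⟨hax.le, hxb.le⟩).ne'
    have hfd : HasDerivAt (wageEq σ φ)
        ((σ * x ^ (σ - 1) * ((x ^ σ - φ) + x * (x ^ (-σ) - φ)) -
          (x ^ σ - φ) *
            (σ * x ^ (σ - 1) + (1 * (x ^ (-σ) - φ) + x * (-σ * x ^ (-σ - 1))))) /
          ((x ^ σ - φ) + x * (x ^ (-σ) - φ)) ^ 2) x := hNd.div hDd hDne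
    rw [hfd.deriv]
    have h1 : x ^ (σ - 1) * x = x ^ σ := by
      rw [← Real.rpow_add_one hx0.ne' (σ - 1), sub_add_cancel]
    have h2 : x ^ (-σ - 1) * x = x ^ (-σ) := by
      rw [← Real.rpow_add_one hx0.ne' (-σ - 1), sub_add_cancel]
    have key : σ * x ^ (σ - 1) * ((x ^ σ - φ) + x * (x ^ (-σ) - φ)) -
          (x ^ σ - φ) *
            (σ * x ^ (σ - 1) + (1 * (x ^ (-σ) - φ) + x * (-σ * x ^ (-σ - 1)))) =
        σ * x ^ σ * (x ^ (-σ) - φ) + σ * x ^ (-σ) * (x ^ σ - φ) -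
          (x ^ σ - φ) * (x ^ (-σ) - φ) := by
      linear_combination (σ * (x ^ (-σ) - φ)) * h1 + (σ * (x ^ σ - φ)) * h2
    rw [key]
    have hA : φ < x ^ σ := hAgt x hax
    have hB : φ < x ^ (-σ) := hBgt x hx0 hxb
    apply div_pos
    · nlinarith [mul_pos (sub_pos.mpr hA) (sub_pos.mpr hB),
        mul_pos hφ0 (sub_pos.mpr hB), mul_pos hφ0 (sub_pos.mpr hA),
        mul_pos (sub_pos.mpr hA) (hφ0.trans hB)]
    · positivity
  -- endpoint values
  have hfa : wageEq σ φ a = 0 := by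
    unfold wageEq
    rw [haσ]
    simp
  have hfb : wageEq σ φ b = 1 := by
    unfold wageEq
    rw [hbσ, hbnσ]
    have : (0:ℝ) < φ⁻¹ - φ := by linarith
    field_simp
    rw [div_eq_one_iff_eq (ne_of_gt (by nlinarith))]
    ring
  -- bijectivity
  have hmaps : MapsTo (wageEq σ φ) (Icc a b) (Icc 0 1) := by
    intro x hx
    have hmono := hsm.monotoneOn
    constructor
    · have := hmono (left_mem_Icc.mpr hab.le) hx hx.1
      rwa [hfa] at this
    · have := hmono hx (right_mem_Icc.mpr hab.le) hx.2
      rwa [hfb] at this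
  have hsurj : SurjOn (wageEq σ φ) (Icc a b) (Icc 0 1) := by
    have := intermediate_value_Icc hab.le hcont
    rw [hfa, hfb] at this
    exact this
  have hbij : BijOn (wageEq σ φ) (Icc a b) (Icc 0 1) :=
    ⟨hmaps, hsm.injOn, hsurj⟩
  refine ⟨hsm, hbij, ?_⟩
  -- the inverse function
  set g : Icc (0:ℝ) 1 → ℝ := fun h => Function.invFunOn (wageEq σ φ) (Icc a b) h with hg_def
  have hgprop : ∀ h : Icc (0:ℝ) 1, g h ∈ Icc a b ∧ wageEq σ φ (g h) = (h : ℝ) := by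
    intro h
    have himg : (h : ℝ) ∈ wageEq σ φ '' Icc a b := hsurj h.2
    exact ⟨Function.invFunOn_mem himg, Function.invFunOn_eq himg⟩
  have hgmono : StrictMono g := by
    intro h1 h2 hlt
    have m1 := (hgprop h1).1
    have m2 := (hgprop h2).1
    rw [← hsm.lt_iff_lt m1 m2, (hgprop h1).2, (hgprop h2).2]
    exact_mod_cast hlt
  refine ⟨g, ⟨hgmono, hgprop⟩, ?_⟩
  rintro w' ⟨-, hw'⟩
  funext h
  exact hsm.injOn (hw' h).1 (hgprop h).1 (by rw [(hw' h).2, (hgprop h).2])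
end

section
/- Let σ > 1 and w > 0. Write f(w; φ) for the wage-equation function with freeness of trade φ. For every φ ∈ (0,1) with w^{2σ} − (w+1)·φ·w^σ + w ≠ 0, the map φ ↦ f(w; φ) has derivative at φ equal to w^{σ+1}·(w^{2σ} − 1)/(w^{2σ} − (w+1)·φ·w^σ + w)²; in particular this derivative is strictly positive when w > 1 and strictly negative when 0 < w < 1. -/
/-- for `σ > 1`, `w > 0`, and every `φ ∈ (0,1)` with
`w^{2σ} − (w+1)·φ·w^σ + w ≠ 0`, the map `φ ↦ f(w; φ)` has derivative at `φ` equal to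
`w^{σ+1}·(w^{2σ} − 1)/(w^{2σ} − (w+1)·φ·w^σ + w)²`; this derivative is strictly positive
when `1 < w` and strictly negative when `0 < w < 1`. -/
theorem stmt_5 (σ w : ℝ) (hσ : 1 < σ) (hw : 0 < w) :
    ∀ φ ∈ Set.Ioo (0 : ℝ) 1, w ^ (2 * σ) - (w + 1) * φ * w ^ σ + w ≠ 0 →
      HasDerivAt (fun φ' => wageEq σ φ' w)
        (w ^ (σ + 1) * (w ^ (2 * σ) - 1) / (w ^ (2 * σ) - (w + 1) * φ * w ^ σ + w) ^ 2) φ ∧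
      (1 < w →
        0 < w ^ (σ + 1) * (w ^ (2 * σ) - 1) / (w ^ (2 * σ) - (w + 1) * φ * w ^ σ + w) ^ 2) ∧
      (w < 1 →
        w ^ (σ + 1) * (w ^ (2 * σ) - 1) / (w ^ (2 * σ) - (w + 1) * φ * w ^ σ + w) ^ 2 < 0) := by
  intro φ hφ hQ
  set a := w ^ σ with ha
  have hapos : 0 < a := Real.rpow_pos_of_pos hw σ
  have hb : w ^ (-σ) = a⁻¹ := by rw [Real.rpow_neg hw.le]
  have h2 : w ^ (2 * σ) = a ^ 2 := by
    rw [two_mul, Real.rpow_add hw, sq]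
  have hs1 : w ^ (σ + 1) = a * w := by
    rw [Real.rpow_add hw, Real.rpow_one]
  set D := (a - φ) + w * (a⁻¹ - φ) with hD
  have hQD : w ^ (2 * σ) - (w + 1) * φ * a + w = a * D := by
    rw [h2, hD]; field_simp; ring
  have hDne : D ≠ 0 := by
    intro h0
    apply hQ
    rw [hQD, h0, mul_zero]
  -- derivative
  have hN : HasDerivAt (fun φ' : ℝ => a - φ') (-1) φ := by
    simpa using (hasDerivAt_id φ).const_sub a
  have hDen : HasDerivAt (fun φ' : ℝ => (a - φ') + w * (a⁻¹ - φ')) (-1 + w * (-1)) φ := by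
    exact hN.add (((hasDerivAt_id φ).const_sub a⁻¹).const_mul w)
  have hdiv := hN.div hDen hDne
  have hNL : (-1) * D - (a - φ) * (-1 + w * (-1)) = w * (a - a⁻¹) := by
    rw [hD]; ring
  have hval : ((-1) * D - (a - φ) * (-1 + w * (-1))) / D ^ 2
      = w ^ (σ + 1) * (w ^ (2 * σ) - 1) / (w ^ (2 * σ) - (w + 1) * φ * a + w) ^ 2 := by
    rw [hNL, hQD, hs1, h2, mul_pow]
    field_simp
  have hfun : (fun φ' => wageEq σ φ' w) = fun y => (a - y) / ((a - y) + w * (a⁻¹ - y)) := by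
    funext y; rw [wageEq, hb, ← ha]
  have hder : HasDerivAt (fun φ' => wageEq σ φ' w)
      (w ^ (σ + 1) * (w ^ (2 * σ) - 1) / (w ^ (2 * σ) - (w + 1) * φ * a + w) ^ 2) φ := by
    rw [hfun, ← hval]
    exact hdiv
  refine ⟨hder, ?_, ?_⟩
  · intro hw1
    have hQ2 : 0 < (w ^ (2 * σ) - (w + 1) * φ * a + w) ^ 2 := pow_two_pos_of_ne_zero hQ
    have hnum : 0 < w ^ (σ + 1) * (w ^ (2 * σ) - 1) := by
      have h1 : 1 < w ^ (2 * σ) := (Real.one_lt_rpow_iff_of_pos hw).mpr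
        (Or.inl ⟨hw1, by linarith⟩)
      have := Real.rpow_pos_of_pos hw (σ + 1)
      nlinarith
    exact div_pos hnum hQ2
  · intro hw1
    have hQ2 : 0 < (w ^ (2 * σ) - (w + 1) * φ * a + w) ^ 2 := pow_two_pos_of_ne_zero hQ
    have hnum : w ^ (σ + 1) * (w ^ (2 * σ) - 1) < 0 := by
      have h1 : w ^ (2 * σ) < 1 := Real.rpow_lt_one hw.le hw1 (by linarith)
      have := Real.rpow_pos_of_pos hw (σ + 1)
      nlinarith
    exact div_neg_of_neg_of_pos hnum hQ2
end

section
/- Let σ > 1 and 0 < φ₁ < φ₂ < 1, and write f(w; φ) for the wage-equation function with freeness of trade φ. Suppose h ∈ (1/2, 1], w₁ ∈ (1, φ₁^{−1/σ}] and w₂ ∈ (1, φ₂^{−1/σ}] satisfy f(w₁; φ₁) = h = f(w₂; φ₂). Then w₂ < w₁. Symmetrically, if h ∈ [0, 1/2), w₁ ∈ [φ₁^{1/σ}, 1) and w₂ ∈ [φ₂^{1/σ}, 1) satisfy f(w₁; φ₁) = h = f(w₂; φ₂), then w₂ > w₁. (When region L is larger than region R the equilibrium relative wage is decreasing in the freeness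 of trade, and increasing when L is smaller.) -/
lemma wageEq_key (σ φ h w : ℝ) (hw : 0 < w)
    (hD : 0 < (w ^ σ - φ) + w * (w ^ (-σ) - φ)) (heq : wageEq σ φ w = h) :
    (1 - h) * w ^ σ + h * φ * w - h * w ^ (1 - σ) - (1 - h) * φ = 0 := by
  unfold wageEq at heq
  rw [div_eq_iff hD.ne'] at heq
  have hws : w ^ (1 - σ) = w * w ^ (-σ) := by
    rw [show (1 - σ) = 1 + (-σ) by ring, Real.rpow_add hw, Real.rpow_one]
  rw [hws]
  linear_combination heq

lemma mono_key (σ h φ a b : ℝ) (hσ : 1 < σ) (ha : 0 < a) (hab : a ≤ b)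
    (h0 : 0 ≤ h) (h1 : h ≤ 1) (hφ : 0 ≤ φ) :
    (1 - h) * a ^ σ + h * φ * a - h * a ^ (1 - σ) ≤
      (1 - h) * b ^ σ + h * φ * b - h * b ^ (1 - σ) := by
  have h1' : a ^ σ ≤ b ^ σ := Real.rpow_le_rpow ha.le hab (by linarith)
  have h2' : b ^ (1 - σ) ≤ a ^ (1 - σ) :=
    Real.rpow_le_rpow_of_nonpos ha hab (by linarith)
  have e1 : 0 ≤ (1 - h) * (b ^ σ - a ^ σ) := mul_nonneg (by linarith) (by linarith)
  have e2 : 0 ≤ h * φ * (b - a) := mul_nonneg (mul_nonneg h0 hφ) (by linarith)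
  have e3 : 0 ≤ h * (a ^ (1 - σ) - b ^ (1 - σ)) := mul_nonneg h0 (by linarith)
  linarith

/-- for `σ > 1` and `0 < φ₁ < φ₂ < 1`: if `h ∈ (1/2, 1]`,
`w₁ ∈ (1, φ₁^{−1/σ}]` and `w₂ ∈ (1, φ₂^{−1/σ}]` satisfy `f(w₁; φ₁) = h = f(w₂; φ₂)`,
then `w₂ < w₁`; and symmetrically, if `h ∈ [0, 1/2)`, `w₁ ∈ [φ₁^{1/σ}, 1)` and
`w₂ ∈ [φ₂^{1/σ}, 1)` satisfy `f(w₁; φ₁) = h = f(w₂; φ₂)`, then `w₂ > w₁`. -/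
theorem stmt_6 (σ φ₁ φ₂ : ℝ) (hσ : 1 < σ) (h01 : 0 < φ₁) (h12 : φ₁ < φ₂) (h21 : φ₂ < 1) :
    (∀ h w₁ w₂ : ℝ, h ∈ Set.Ioc (1 / 2 : ℝ) 1 →
      w₁ ∈ Set.Ioc (1 : ℝ) (φ₁ ^ (-(1 / σ))) → w₂ ∈ Set.Ioc (1 : ℝ) (φ₂ ^ (-(1 / σ))) →
      wageEq σ φ₁ w₁ = h → wageEq σ φ₂ w₂ = h → w₂ < w₁) ∧
    (∀ h w₁ w₂ : ℝ, h ∈ Set.Ico (0 : ℝ) (1 / 2) →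
      w₁ ∈ Set.Ico (φ₁ ^ (1 / σ)) (1 : ℝ) → w₂ ∈ Set.Ico (φ₂ ^ (1 / σ)) (1 : ℝ) →
      wageEq σ φ₁ w₁ = h → wageEq σ φ₂ w₂ = h → w₁ < w₂) := by
  have hσ0 : (0 : ℝ) < σ := by linarith
  constructor
  · -- h ∈ (1/2, 1]
    rintro h w₁ w₂ ⟨hh1, hh2⟩ ⟨hw1a, hw1b⟩ ⟨hw2a, hw2b⟩ he1 he2
    have key : ∀ φ w : ℝ, 0 < φ → φ < 1 → 1 < w → w ≤ φ ^ (-(1 / σ)) →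
        wageEq σ φ w = h →
        (1 - h) * w ^ σ + h * φ * w - h * w ^ (1 - σ) - (1 - h) * φ = 0 := by
      intro φ w hφ0 hφ1 hw1 hwle he
      have hwp : 0 < w := by linarith
      have hA : φ < w ^ σ := by
        have : (1 : ℝ) < w ^ σ := by
          have := Real.rpow_lt_rpow (by norm_num) hw1 hσ0
          rwa [Real.one_rpow] at this
        linarith
      have hB : φ ≤ w ^ (-σ) := by
        have h1 : (φ ^ (-(1 / σ))) ^ (-σ) ≤ w ^ (-σ) :=
          Real.rpow_le_rpow_of_nonpos hwp hwle (by linarith)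
        rwa [← Real.rpow_mul hφ0.le, show (-(1 / σ)) * (-σ) = 1 by field_simp,
          Real.rpow_one] at h1
      have hD : 0 < (w ^ σ - φ) + w * (w ^ (-σ) - φ) := by
        have : 0 ≤ w * (w ^ (-σ) - φ) := mul_nonneg hwp.le (by linarith)
        linarith
      exact wageEq_key σ φ h w hwp hD he
    have k1 := key φ₁ w₁ h01 (by linarith) hw1a hw1b he1
    have k2 := key φ₂ w₂ (by linarith) h21 hw2a hw2b he2
    -- g(w₂, φ₁) < 0 since h*w₂ - (1-h) > 0
    have hpos : 0 < h * w₂ - (1 - h) := by nlinarith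
    have k2' : (1 - h) * w₂ ^ σ + h * φ₁ * w₂ - h * w₂ ^ (1 - σ) - (1 - h) * φ₁ < 0 := by
      nlinarith
    by_contra hcon
    push_neg at hcon
    have := mono_key σ h φ₁ w₁ w₂ hσ (by linarith) hcon (by linarith) hh2 h01.le
    linarith
  · -- h ∈ [0, 1/2)
    rintro h w₁ w₂ ⟨hh1, hh2⟩ ⟨hw1a, hw1b⟩ ⟨hw2a, hw2b⟩ he1 he2
    have key : ∀ φ w : ℝ, 0 < φ → φ < 1 → φ ^ (1 / σ) ≤ w → w < 1 →
        wageEq σ φ w = h →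
        (1 - h) * w ^ σ + h * φ * w - h * w ^ (1 - σ) - (1 - h) * φ = 0 := by
      intro φ w hφ0 hφ1 hwle hw1 he
      have hwp : 0 < w := lt_of_lt_of_le (Real.rpow_pos_of_pos hφ0 _) hwle
      have hA : φ ≤ w ^ σ := by
        have h1 : (φ ^ (1 / σ)) ^ σ ≤ w ^ σ :=
          Real.rpow_le_rpow (Real.rpow_pos_of_pos hφ0 _).le hwle hσ0.le
        rwa [← Real.rpow_mul hφ0.le, show (1 / σ) * σ = 1 by field_simp,
          Real.rpow_one] at h1
      have hB : φ < w ^ (-σ) := by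
        have : (1 : ℝ) < w ^ (-σ) := by
          have := Real.rpow_lt_rpow_of_neg hwp hw1 (by linarith : -σ < 0)
          rwa [Real.one_rpow] at this
        linarith
      have hD : 0 < (w ^ σ - φ) + w * (w ^ (-σ) - φ) := by
        have : 0 < w * (w ^ (-σ) - φ) := mul_pos hwp (by linarith)
        linarith
      exact wageEq_key σ φ h w hwp hD he
    have hw1p : 0 < w₁ := lt_of_lt_of_le (Real.rpow_pos_of_pos h01 _) hw1a
    have hw2p : 0 < w₂ := lt_of_lt_of_le (Real.rpow_pos_of_pos (by linarith) _) hw2a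
    have k1 := key φ₁ w₁ h01 (by linarith) hw1a hw1b he1
    have k2 := key φ₂ w₂ (by linarith) h21 hw2a hw2b he2
    -- g(w₁, φ₂) < 0 since h*w₁ - (1-h) < 0
    have hneg : h * w₁ - (1 - h) < 0 := by nlinarith
    have k1' : (1 - h) * w₁ ^ σ + h * φ₂ * w₁ - h * w₁ ^ (1 - σ) - (1 - h) * φ₂ < 0 := by
      nlinarith
    by_contra hcon
    push_neg at hcon
    have := mono_key σ h φ₂ w₂ w₁ hσ hw2p hcon (by linarith) (by linarith) (by linarith)
    linarith
end

section
/- Let σ > 1 and φ ∈ (0,1). The wage-equation function f has derivative at w = 1 equal to (2σ + φ − 1)/(4(1 − φ)). (Hence the implicitly defined short-run equilibrium wage w(h) has derivative 4(1 − φ)/(2σ + φ − 1) at the symmetric distribution h = 1/2.) -/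
/-- for `σ > 1` and `φ ∈ (0,1)`, the wage-equation function has derivative
`(2σ + φ − 1)/(4(1 − φ))` at `w = 1`. -/
theorem stmt_7 (σ φ : ℝ) (hσ : 1 < σ) (hφ : φ ∈ Set.Ioo (0 : ℝ) 1) :
    HasDerivAt (wageEq σ φ) ((2 * σ + φ - 1) / (4 * (1 - φ))) 1 := by
  obtain ⟨hφ0, hφ1⟩ := hφ
  have h1 : (1 : ℝ) ≠ 0 := one_ne_zero
  have hpow : HasDerivAt (fun w : ℝ => w ^ σ) σ 1 := by
    have := Real.hasDerivAt_rpow_const (x := (1 : ℝ)) (p := σ) (Or.inl h1)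
    simpa using this
  have hpown : HasDerivAt (fun w : ℝ => w ^ (-σ)) (-σ) 1 := by
    have := Real.hasDerivAt_rpow_const (x := (1 : ℝ)) (p := -σ) (Or.inl h1)
    simpa using this
  have hN : HasDerivAt (fun w : ℝ => w ^ σ - φ) σ 1 := hpow.sub_const φ
  have hD : HasDerivAt (fun w : ℝ => (w ^ σ - φ) + w * (w ^ (-σ) - φ)) (1 - φ) 1 := by
    have hmul : HasDerivAt (fun w : ℝ => w * (w ^ (-σ) - φ))
        (1 * ((1 : ℝ) ^ (-σ) - φ) + 1 * (-σ)) 1 :=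
      (hasDerivAt_id 1).mul (hpown.sub_const φ)
    have := hN.add hmul
    exact this.congr_deriv (by simp)
  have hD1 : ((1 : ℝ) ^ σ - φ) + 1 * ((1 : ℝ) ^ (-σ) - φ) ≠ 0 := by
    simp only [Real.one_rpow, one_mul]
    nlinarith
  have hdiv := hN.div hD hD1
  have : HasDerivAt (wageEq σ φ)
      ((σ * (((1:ℝ) ^ σ - φ) + 1 * ((1:ℝ) ^ (-σ) - φ)) - ((1:ℝ) ^ σ - φ) * (1 - φ)) /
        (((1:ℝ) ^ σ - φ) + 1 * ((1:ℝ) ^ (-σ) - φ)) ^ 2) 1 := hdiv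
  convert this using 1
  simp only [Real.one_rpow]
  have h2 : (0 : ℝ) < 1 - φ := by linarith
  rw [div_eq_div_iff (by positivity) (by positivity)]
  ring
end

section
/- Let σ > 1 and θ ≥ 0, and define g(φ) = 2(2σ−1)(1−φ)·((1+φ)/2)^{(1−θ)/(σ−1)} / [(σ−1)(2σ+φ−1)] for φ ∈ (0,1). If either (i) 0 ≤ θ < 1 and σ > 1 + √2/2, or (ii) θ ≥ 1, then g is strictly decreasing on (0,1). -/
/-- let `σ > 1`, `θ ≥ 0` and
`g(φ) = 2(2σ−1)(1−φ)·((1+φ)/2)^{(1−θ)/(σ−1)}/[(σ−1)(2σ+φ−1)]`.  If either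
(i) `0 ≤ θ < 1` and `σ > 1 + √2/2`, or (ii) `θ ≥ 1`, then `g` is strictly
decreasing on `(0,1)`. -/
theorem stmt_9 (σ θ : ℝ) (hσ : 1 < σ) (hθ : 0 ≤ θ)
    (hcase : (θ < 1 ∧ 1 + Real.sqrt 2 / 2 < σ) ∨ 1 ≤ θ) :
    StrictAntiOn (fun φ : ℝ =>
        2 * (2 * σ - 1) * (1 - φ) * ((1 + φ) / 2) ^ ((1 - θ) / (σ - 1)) /
          ((σ - 1) * (2 * σ + φ - 1)))
      (Set.Ioo (0 : ℝ) 1) := by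
  have hσ1 : (0:ℝ) < σ - 1 := by linarith
  set a : ℝ := (1 - θ) / (σ - 1) with ha
  have H : ∀ x ∈ Set.Ioo (0:ℝ) 1, HasDerivAt (fun φ : ℝ =>
      2 * (2 * σ - 1) * (1 - φ) * ((1 + φ) / 2) ^ a /
        ((σ - 1) * (2 * σ + φ - 1)))
      (((2 * (2 * σ - 1) * -1 * ((1 + x) / 2) ^ a +
          2 * (2 * σ - 1) * (1 - x) * (1/2 * a * ((1 + x) / 2) ^ (a - 1))) *
          ((σ - 1) * (2 * σ + x - 1)) -
        2 * (2 * σ - 1) * (1 - x) * ((1 + x) / 2) ^ a * ((σ - 1) * 1)) /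
        ((σ - 1) * (2 * σ + x - 1)) ^ 2) x := by
    intro x hx
    obtain ⟨hx0, hx1⟩ := hx
    have hu : (0:ℝ) < (1 + x) / 2 := by linarith
    have hd1 : HasDerivAt (fun φ : ℝ => (1 + φ) / 2) (1/2) x := by
      simpa using ((hasDerivAt_id x).const_add 1).div_const 2
    have hpow : HasDerivAt (fun φ : ℝ => ((1 + φ) / 2) ^ a)
        (1/2 * a * ((1 + x) / 2) ^ (a - 1)) x :=
      hd1.rpow_const (Or.inl (ne_of_gt hu))
    have hlin : HasDerivAt (fun φ : ℝ => 2 * (2 * σ - 1) * (1 - φ))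
        (2 * (2 * σ - 1) * -1) x := by
      simpa using ((hasDerivAt_id x).const_sub 1).const_mul (2 * (2 * σ - 1))
    have hden : HasDerivAt (fun φ : ℝ => (σ - 1) * (2 * σ + φ - 1))
        ((σ - 1) * 1) x := by
      simpa using (((hasDerivAt_id x).const_add (2*σ)).sub_const 1).const_mul (σ - 1)
    have hdne : (σ - 1) * (2 * σ + x - 1) ≠ 0 := by
      have : (0:ℝ) < 2 * σ + x - 1 := by linarith
      positivity
    exact (hlin.mul hpow).div hden hdne
  have hkey : ∀ x ∈ Set.Ioo (0:ℝ) 1, a * ((1 - x) * (2 * σ + x - 1)) < 2 * σ * (1 + x) := by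
    intro x hx
    obtain ⟨hx0, hx1⟩ := hx
    have hX : (0:ℝ) < (1 - x) * (2 * σ + x - 1) := by nlinarith
    rcases hcase with ⟨hθ1, hσ2⟩ | hθ1
    · have ha0 : a * (σ - 1) = 1 - θ := div_mul_cancel₀ _ (ne_of_gt hσ1)
      have hsq : 1 < 2 * (σ - 1) ^ 2 := by
        have h2 : Real.sqrt 2 ^ 2 = 2 := Real.sq_sqrt (by norm_num)
        nlinarith [Real.sqrt_nonneg 2]
      have h3 : (1 - x) * (2 * σ + x - 1) < 2 * σ * (σ - 1) * (1 + x) := by nlinarith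
      have h5 : a * ((1 - x) * (2 * σ + x - 1)) * (σ - 1) < 2 * σ * (1 + x) * (σ - 1) := by
        have h4 : a * ((1 - x) * (2 * σ + x - 1)) * (σ - 1)
            = (1 - θ) * ((1 - x) * (2 * σ + x - 1)) := by
          rw [← ha0]; ring
        rw [h4]; nlinarith
      exact lt_of_mul_lt_mul_right h5 (le_of_lt hσ1)
    · have ha0 : a ≤ 0 := by
        apply div_nonpos_of_nonpos_of_nonneg <;> linarith
      have := mul_nonpos_of_nonpos_of_nonneg ha0 (le_of_lt hX)
      nlinarith
  apply strictAntiOn_of_deriv_neg (convex_Ioo 0 1)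
  · exact fun x hx => (H x hx).continuousAt.continuousWithinAt
  · intro x hx
    rw [interior_Ioo] at hx
    rw [(H x hx).deriv]
    obtain ⟨hx0, hx1⟩ := hx
    have hu : (0:ℝ) < (1 + x) / 2 := by linarith
    have hP : (0:ℝ) < ((1 + x) / 2) ^ (a - 1) := Real.rpow_pos_of_pos hu _
    have hQ : ((1 + x) / 2) ^ a = ((1 + x) / 2) ^ (a - 1) * ((1 + x) / 2) := by
      rw [← Real.rpow_add_one (ne_of_gt hu) (a - 1)]; ring_nf
    have hdpos : (0:ℝ) < ((σ - 1) * (2 * σ + x - 1)) ^ 2 := by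
      have : (0:ℝ) < 2 * σ + x - 1 := by linarith
      positivity
    apply div_neg_of_neg_of_pos _ hdpos
    have hin : a * ((1 - x) * (2 * σ + x - 1)) - 2 * σ * (1 + x) < 0 := by
      have := hkey x ⟨hx0, hx1⟩; linarith
    have heq : (2 * (2 * σ - 1) * -1 * ((1 + x) / 2) ^ a +
          2 * (2 * σ - 1) * (1 - x) * (1/2 * a * ((1 + x) / 2) ^ (a - 1))) *
          ((σ - 1) * (2 * σ + x - 1)) -
        2 * (2 * σ - 1) * (1 - x) * ((1 + x) / 2) ^ a * ((σ - 1) * 1)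
        = (2 * (2 * σ - 1) * (σ - 1) * ((1 + x) / 2) ^ (a - 1)) *
          ((a * ((1 - x) * (2 * σ + x - 1)) - 2 * σ * (1 + x)) / 2) := by
      rw [hQ]; ring
    rw [heq]
    apply mul_neg_of_pos_of_neg
    · have h1 : (0:ℝ) < 2 * (2 * σ - 1) * (σ - 1) := by nlinarith
      positivity
    · linarith
end

section
/- Let σ > 1, θ ≥ 0, and assume either (i) 0 ≤ θ < 1 and σ > 1 + √2/2, or (ii) θ ≥ 1. Define g(φ) = 2(2σ−1)(1−φ)·((1+φ)/2)^{(1−θ)/(σ−1)} / [(σ−1)(2σ+φ−1)] on (0,1). Then for every c > 0: (a) if g(φ₀) ≤ c for some φ₀ ∈ (0,1), then g(φ₁) < c for every φ₁ ∈ (φ₀, 1); and (b) g(φ) → 0 as φ → 1⁻, so there exists φ̄ ∈ (0,1) with g(φ) < c for all φ ∈ (φ̄, 1). (As the freeness of trade increases, symmetric dispersion either remains stable or becomes stable, taking c = t′(1/2).) -/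
open Filter Topology

/-- let `σ > 1`, `θ ≥ 0`, with either (i) `0 ≤ θ < 1` and `σ > 1 + √2/2`,
or (ii) `θ ≥ 1`, and let
`g(φ) = 2(2σ−1)(1−φ)·((1+φ)/2)^{(1−θ)/(σ−1)}/[(σ−1)(2σ+φ−1)]` on `(0,1)`.
Then for every `c > 0`: (a) if `g(φ₀) ≤ c` for some `φ₀ ∈ (0,1)`, then `g(φ₁) < c` for
every `φ₁ ∈ (φ₀, 1)`; and (b) `g(φ) → 0` as `φ → 1⁻`, so there is `φ̄ ∈ (0,1)` with
`g(φ) < c` for all `φ ∈ (φ̄, 1)`. -/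
theorem stmt_10 (σ θ : ℝ) (hσ : 1 < σ) (hθ : 0 ≤ θ)
    (hcase : (θ < 1 ∧ 1 + Real.sqrt 2 / 2 < σ) ∨ 1 ≤ θ)
    (g : ℝ → ℝ)
    (hg : g = fun φ : ℝ =>
      2 * (2 * σ - 1) * (1 - φ) * ((1 + φ) / 2) ^ ((1 - θ) / (σ - 1)) /
        ((σ - 1) * (2 * σ + φ - 1))) :
    (∀ c : ℝ, 0 < c → ∀ φ₀ ∈ Set.Ioo (0 : ℝ) 1, g φ₀ ≤ c →
      ∀ φ₁ ∈ Set.Ioo φ₀ 1, g φ₁ < c) ∧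
    Tendsto g (𝓝[<] 1) (𝓝 0) ∧
    (∀ c : ℝ, 0 < c → ∃ φbar ∈ Set.Ioo (0 : ℝ) 1, ∀ φ ∈ Set.Ioo φbar 1, g φ < c) := by
  have hs : (0:ℝ) < σ - 1 := by linarith
  set α : ℝ := (1 - θ) / (σ - 1) with hα
  have hαs : α * (σ - 1) = 1 - θ := div_mul_cancel₀ _ hs.ne'
  -- key polynomial inequality
  have hkey : ∀ φ : ℝ, 0 < φ → φ < 1 →
      (1 - θ) * ((1 - φ) * (2 * σ + φ - 1)) < 2 * σ * (1 + φ) * (σ - 1) := by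
    intro φ h0 h1
    rcases hcase with ⟨hθ1, hσ2⟩ | hθ1
    · have hsq : Real.sqrt 2 / 2 < σ - 1 := by linarith
      have h2 : (1:ℝ) < 2 * (σ - 1) ^ 2 := by
        nlinarith [Real.sq_sqrt (by norm_num : (2:ℝ) ≥ 0), Real.sqrt_nonneg 2]
      nlinarith [sq_nonneg φ, mul_pos hs h0, mul_pos (mul_pos hs hs) h0,
        mul_nonneg hθ (mul_nonneg (by linarith : (0:ℝ) ≤ 1 - φ) (by linarith : (0:ℝ) ≤ 2 * σ + φ - 1))]
    · nlinarith [mul_nonneg (by linarith : (0:ℝ) ≤ 1 - φ) (by linarith : (0:ℝ) ≤ 2 * σ + φ - 1),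
        mul_pos (mul_pos (by linarith : (0:ℝ) < 2 * σ) (by linarith : (0:ℝ) < 1 + φ)) hs]
  -- derivative of g
  have hder : ∀ φ : ℝ, -1 < φ → ∃ v, HasDerivAt g v φ ∧ (0 < φ → φ < 1 → v < 0) := by
    intro φ hφ
    have hb : (0:ℝ) < (1 + φ) / 2 := by linarith
    have hdpos : (0:ℝ) < 2 * σ + φ - 1 := by linarith
    have hD : (σ - 1) * (2 * σ + φ - 1) ≠ 0 := by positivity
    have h1 : HasDerivAt (fun x : ℝ => (1 + x) / 2) (1 / 2) φ := by
      simpa using ((hasDerivAt_id φ).const_add 1).div_const 2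
    have h2 : HasDerivAt (fun x : ℝ => ((1 + x) / 2) ^ α)
        (1 / 2 * α * ((1 + φ) / 2) ^ (α - 1)) φ := h1.rpow_const (Or.inl hb.ne')
    have h3 : HasDerivAt (fun x : ℝ => 2 * (2 * σ - 1) * (1 - x))
        (2 * (2 * σ - 1) * (-1)) φ := by
      simpa using ((hasDerivAt_id φ).const_sub 1).const_mul (2 * (2 * σ - 1))
    have hN : HasDerivAt (fun x : ℝ => 2 * (2 * σ - 1) * (1 - x) * ((1 + x) / 2) ^ α)
        (2 * (2 * σ - 1) * (-1) * ((1 + φ) / 2) ^ α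
          + 2 * (2 * σ - 1) * (1 - φ) * (1 / 2 * α * ((1 + φ) / 2) ^ (α - 1))) φ :=
      h3.mul h2
    have hDen : HasDerivAt (fun x : ℝ => (σ - 1) * (2 * σ + x - 1)) ((σ - 1) * 1) φ := by
      have : HasDerivAt (fun x : ℝ => 2 * σ + x - 1) 1 φ := by
        simpa using ((hasDerivAt_id φ).const_add (2 * σ)).sub_const 1
      simpa using this.const_mul (σ - 1)
    have hv := hN.div hDen hD
    rw [hg]
    refine ⟨_, hv, fun h0 h1 => ?_⟩
    apply div_neg_of_neg_of_pos
    · -- numerator negative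
      have hP : (0:ℝ) < ((1 + φ) / 2) ^ (α - 1) := Real.rpow_pos_of_pos hb _
      have hbb : ((1 + φ) / 2) ^ α = ((1 + φ) / 2) ^ (α - 1) * ((1 + φ) / 2) := by
        rw [← Real.rpow_add_one hb.ne' (α - 1)]; norm_num
      have hE : α * ((1 - φ) * (2 * σ + φ - 1)) / 2 - σ * (1 + φ) < 0 := by
        have hk := hkey φ h0 h1
        have h' : α * ((1 - φ) * (2 * σ + φ - 1)) < 2 * σ * (1 + φ) := by
          rw [hα, div_mul_eq_mul_div, div_lt_iff₀ hs]
          linarith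
        linarith
      have heq : (2 * (2 * σ - 1) * (-1) * ((1 + φ) / 2) ^ α
          + 2 * (2 * σ - 1) * (1 - φ) * (1 / 2 * α * ((1 + φ) / 2) ^ (α - 1)))
            * ((σ - 1) * (2 * σ + φ - 1))
          - 2 * (2 * σ - 1) * (1 - φ) * ((1 + φ) / 2) ^ α * ((σ - 1) * 1)
          = (σ - 1) * (2 * (2 * σ - 1)) * ((1 + φ) / 2) ^ (α - 1)
              * (α * ((1 - φ) * (2 * σ + φ - 1)) / 2 - σ * (1 + φ)) := by
        rw [hbb]; ring
      rw [heq]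
      exact mul_neg_of_pos_of_neg (mul_pos (mul_pos hs (by linarith)) hP) hE
    · exact pow_pos (mul_pos hs hdpos) 2
  -- strict antitonicity on [0,1)
  have hanti : StrictAntiOn g (Set.Ico 0 1) := by
    apply strictAntiOn_of_deriv_neg (convex_Ico 0 1)
    · intro x hx
      obtain ⟨v, hv, -⟩ := hder x (by linarith [hx.1])
      exact hv.continuousAt.continuousWithinAt
    · intro x hx
      rw [interior_Ico] at hx
      obtain ⟨v, hv, hneg⟩ := hder x (by linarith [hx.1])
      rw [hv.deriv]
      exact hneg hx.1 hx.2
  have hg1 : g 1 = 0 := by rw [hg]; norm_num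
  have htend : Tendsto g (𝓝[<] 1) (𝓝 0) := by
    obtain ⟨v, hv, -⟩ := hder 1 (by norm_num)
    have := hv.continuousAt.tendsto
    rw [hg1] at this
    exact this.mono_left nhdsWithin_le_nhds
  refine ⟨?_, htend, ?_⟩
  · intro c hc φ₀ hφ₀ hgc φ₁ hφ₁
    have : g φ₁ < g φ₀ :=
      hanti ⟨le_of_lt hφ₀.1, hφ₀.2⟩ ⟨by linarith [hφ₀.1, hφ₁.1], hφ₁.2⟩ hφ₁.1
    linarith
  · intro c hc
    have hev : ∀ᶠ φ in 𝓝[<] (1:ℝ), g φ < c := htend.eventually (gt_mem_nhds hc)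
    rw [eventually_nhdsWithin_iff] at hev
    obtain ⟨ε, hε, hball⟩ := Metric.eventually_nhds_iff.mp hev
    refine ⟨max (1 - ε) (1/2),
      ⟨lt_of_lt_of_le (by norm_num) (le_max_right _ _),
       max_lt (by linarith) (by norm_num)⟩, ?_⟩
    intro φ hφ
    refine hball ?_ hφ.2
    have h1 : 1 - ε < φ := lt_of_le_of_lt (le_max_left _ _) hφ.1
    rw [Real.dist_eq, abs_lt]
    constructor <;> linarith [hφ.2]
end

section
/- Let μ > 0 and let g : [1/2, 1) → ℝ be continuous and bounded above with g(1/2) = 0. Define Δt(h) = μ·(ln(h) − ln(1−h)). Suppose there exists δ > 0 such that g(h) > Δt(h) for all h ∈ (1/2, 1/2 + δ). Then there exists h* ∈ (1/2, 1) with g(h*) = Δt(h*). (Under Logit-type heterogeneous location preferences, whenever symmetric dispersion is unstable a partial agglomeration equilibrium h* ∈ (1/2,1) exists.) -/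
/-- let `μ > 0` and let `g` be continuous and bounded above on `[1/2, 1)`
with `g(1/2) = 0`, and let `Δt(h) = μ(ln h − ln(1−h))`.  If `g(h) > Δt(h)` for all `h`
in some right-neighbourhood `(1/2, 1/2 + δ)`, then there exists `h* ∈ (1/2, 1)` with
`g(h*) = Δt(h*)`. -/
theorem stmt_15 (μ : ℝ) (hμ : 0 < μ) (g : ℝ → ℝ)
    (hgc : ContinuousOn g (Set.Ico (1 / 2 : ℝ) 1))
    (hgb : BddAbove (g '' Set.Ico (1 / 2 : ℝ) 1))
    (hg0 : g (1 / 2) = 0)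
    (hδ : ∃ δ > (0 : ℝ), ∀ h ∈ Set.Ioo (1 / 2 : ℝ) (1 / 2 + δ),
      μ * (Real.log h - Real.log (1 - h)) < g h) :
    ∃ hstar ∈ Set.Ioo (1 / 2 : ℝ) 1,
      g hstar = μ * (Real.log hstar - Real.log (1 - hstar)) := by
  obtain ⟨δ, hδpos, hδlt⟩ := hδ
  obtain ⟨M, hM⟩ := hgb
  have hM' : ∀ x ∈ Set.Ico (1 / 2 : ℝ) 1, g x ≤ M := fun x hx =>
    hM ⟨x, hx, rfl⟩
  have hM0 : (0 : ℝ) ≤ M := by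
    have := hM' (1 / 2) ⟨le_refl _, by norm_num⟩
    linarith [hg0 ▸ this]
  set a : ℝ := 1 / 2 + min (δ / 2) (1 / 4) with ha
  have hmin : 0 < min (δ / 2) (1 / 4) := lt_min (by linarith) (by norm_num)
  have ha1 : 1 / 2 < a := by simp [ha]; linarith
  have ha2 : a < 1 / 2 + δ := by
    have := min_le_left (δ / 2) (1 / 4); simp only [ha]; linarith
  have ha3 : a < 1 := by
    have := min_le_right (δ / 2) (1 / 4); simp only [ha]; linarith
  set c : ℝ := 1 - Real.exp (-(M / μ + 2)) with hc
  have hexp_pos : 0 < Real.exp (-(M / μ + 2)) := Real.exp_pos _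
  have hc1 : c < 1 := by simp only [hc]; linarith
  have hc2 : (1 / 2 : ℝ) < c := by
    have h1 : Real.exp (-(M / μ + 2)) ≤ Real.exp (-2) := by
      apply Real.exp_le_exp.mpr
      have : 0 ≤ M / μ := div_nonneg hM0 hμ.le
      linarith
    have h2 : Real.exp (-2 : ℝ) < 1 / 2 := by
      have h3 : (3 : ℝ) ≤ Real.exp 2 := by
        have := Real.add_one_le_exp (2 : ℝ); linarith
      rw [Real.exp_neg]
      rw [inv_lt_comm₀ (by linarith) (by norm_num)]
      linarith
    simp only [hc]; linarith
  set b : ℝ := max a c with hb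
  have hab : a ≤ b := le_max_left _ _
  have hcb : c ≤ b := le_max_right _ _
  have hb1 : b < 1 := max_lt ha3 hc1
  have hb2 : (1 / 2 : ℝ) < b := lt_of_lt_of_le ha1 hab
  -- the difference function
  set f : ℝ → ℝ := fun h => g h - μ * (Real.log h - Real.log (1 - h)) with hf
  have hsub : Set.Icc a b ⊆ Set.Ico (1 / 2 : ℝ) 1 := fun x hx =>
    ⟨le_of_lt (lt_of_lt_of_le ha1 hx.1), lt_of_le_of_lt hx.2 hb1⟩
  have hfc : ContinuousOn f (Set.Icc a b) := by
    apply ContinuousOn.sub (hgc.mono hsub)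
    apply ContinuousOn.mul continuousOn_const
    apply ContinuousOn.sub
    · apply Real.continuousOn_log.comp continuousOn_id
      intro x hx
      have := hsub hx
      simp only [Set.mem_compl_iff, Set.mem_singleton_iff, id]
      intro h; rw [h] at this; exact absurd this.1 (by norm_num)
    · apply Real.continuousOn_log.comp (continuousOn_const.sub continuousOn_id)
      intro x hx
      have := (hsub hx).2
      simp only [Set.mem_compl_iff, Set.mem_singleton_iff]
      intro h; simp only [Pi.sub_apply, id] at h; linarith [sub_eq_zero.mp h]
  have hfa : 0 < f a := by
    have := hδlt a ⟨ha1, ha2⟩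
    simp only [hf]; linarith
  have hfb : f b < 0 := by
    have hcpos : (0:ℝ) < c := lt_trans one_half_pos hc2
    have hblog : Real.log c ≤ Real.log b := Real.log_le_log hcpos hcb
    have hblog2 : Real.log (1 - b) ≤ Real.log (1 - c) :=
      Real.log_le_log (by linarith : (0:ℝ) < 1 - b) (by linarith : (1:ℝ) - b ≤ 1 - c)
    have hlogc : Real.log (1 - c) = -(M / μ + 2) := by
      simp only [hc, sub_sub_cancel, Real.log_exp]
    have hlogc2 : -1 ≤ Real.log c := by
      have h1 : Real.log (1 / 2 : ℝ) ≤ Real.log c :=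
        Real.log_le_log (by norm_num) hc2.le
      have : Real.log (1 / 2 : ℝ) = -Real.log 2 := by
        rw [Real.log_div one_ne_zero (by norm_num), Real.log_one]; ring
      have := Real.log_two_lt_d9
      linarith
    have key : M < μ * (Real.log b - Real.log (1 - b)) := by
      have h1 : M / μ + 1 ≤ Real.log b - Real.log (1 - b) := by
        rw [hlogc] at hblog2; linarith
      have h2 : μ * (M / μ + 1) ≤ μ * (Real.log b - Real.log (1 - b)) :=
        mul_le_mul_of_nonneg_left h1 hμ.le
      have h3 : μ * (M / μ + 1) = M + μ := by field_simp
      linarith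
    have hgbM : g b ≤ M := hM' b ⟨hb2.le, hb1⟩
    simp only [hf]; linarith
  have hivt := intermediate_value_Icc' hab hfc
  have h0mem : (0 : ℝ) ∈ Set.Icc (f b) (f a) := ⟨hfb.le, hfa.le⟩
  obtain ⟨x, hx, hfx⟩ := hivt h0mem
  refine ⟨x, ⟨lt_of_lt_of_le ha1 hx.1, lt_of_le_of_lt hx.2 hb1⟩, ?_⟩
  simp only [hf] at hfx
  linarith
end

section
/- Let σ > 1, φ ∈ (0,1), μ > 0, and X ∈ (1, 1/φ). Define Γ(μ, X) = φ·[μ(σ−1)² − 2σ + 1]·(1 + X²) − X·{ φ²·[−(μ+2)σ + μ + 1] + (2σ−1)·[μ(σ−1) − 1] } and μ_p(X) = (2σ−1)·(X − φ)·(1 − Xφ) / [ (σ−1)·( (2σ − φ² − 1)·X − (σ−1)·φ·(X² + 1) ) ]. Then Γ(μ, X) < 0 if and only if μ > μ_p(X). (With X = w^σ at an interior equilibrium, this is the stability condition for partial agglomeration under Logit preferences and logarithmic consumption utility.) -/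
/-- for `σ > 1`, `φ ∈ (0,1)`, `μ > 0` and `X ∈ (1, 1/φ)`, with
`Γ(μ,X) = φ[μ(σ−1)² − 2σ + 1](1 + X²) − X{φ²[−(μ+2)σ + μ + 1] + (2σ−1)[μ(σ−1) − 1]}`
and `μ_p(X) = (2σ−1)(X − φ)(1 − Xφ)/[(σ−1)((2σ − φ² − 1)X − (σ−1)φ(X² + 1))]`,
one has `Γ(μ,X) < 0` if and only if `μ > μ_p(X)`. -/
theorem stmt_16 (σ φ μ X : ℝ) (hσ : 1 < σ) (hφ : φ ∈ Set.Ioo (0 : ℝ) 1)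
    (hμ : 0 < μ) (hX : X ∈ Set.Ioo (1 : ℝ) (1 / φ)) :
    φ * (μ * (σ - 1) ^ 2 - 2 * σ + 1) * (1 + X ^ 2) -
        X * (φ ^ 2 * (-(μ + 2) * σ + μ + 1) + (2 * σ - 1) * (μ * (σ - 1) - 1)) < 0 ↔
    μ > (2 * σ - 1) * (X - φ) * (1 - X * φ) /
        ((σ - 1) * ((2 * σ - φ ^ 2 - 1) * X - (σ - 1) * φ * (X ^ 2 + 1))) := by
  obtain ⟨hφ0, hφ1⟩ := hφ
  obtain ⟨hX1, hXφ⟩ := hX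
  have hXφ' : X * φ < 1 := by
    rw [lt_div_iff₀ hφ0] at hXφ; linarith
  have hσ1 : (0:ℝ) < σ - 1 := by linarith
  have hD : 0 < (σ - 1) * ((2 * σ - φ ^ 2 - 1) * X - (σ - 1) * φ * (X ^ 2 + 1)) := by
    have h1 : 0 < (X - 1) * (1 - X * φ) := mul_pos (by linarith) (by linarith)
    nlinarith [mul_pos hσ1 hφ0, mul_pos (mul_pos hσ1 hφ0) h1,
      mul_pos hφ0 (sub_pos.2 hφ1), mul_pos hσ1 (sub_pos.2 hφ1),
      mul_pos (mul_pos hσ1 (sub_pos.2 hφ1)) (sub_pos.2 hX1),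
      mul_pos hσ1 h1, mul_pos (sub_pos.2 hX1) (sub_pos.2 hφ1)]
  rw [gt_iff_lt, div_lt_iff₀ hD]
  constructor <;> intro h <;> nlinarith [h]
end

section
/- Let σ > 1 and φ ∈ (0,1). Define μ_p(X) = (2σ−1)·(X − φ)·(1 − Xφ) / [ (σ−1)·( (2σ − φ² − 1)·X − (σ−1)·φ·(X² + 1) ) ] for X ∈ [1, 1/φ], and μ_d = (2σ−1)(1−φ)/[(σ−1)(2σ+φ−1)]. Then: (a) μ_p is strictly decreasing on (1, 1/φ), its derivative at X being σ(2σ−1)(X²−1)φ(φ²−1)/{(σ−1)[(σ−1)(X²+1)φ − 2σX + Xφ² + X]²} < 0; (b) μ_p(1) = μ_d and μ_p(X) → 0 as X → 1/φ; hence (c) 0 < μ_p(X) < μ_d for every X ∈ (1, 1/φ). -/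
open Filter Topology

/-- let `σ > 1`, `φ ∈ (0,1)`,
`μ_p(X) = (2σ−1)(X − φ)(1 − Xφ)/[(σ−1)((2σ − φ² − 1)X − (σ−1)φ(X² + 1))]` and
`μ_d = (2σ−1)(1−φ)/[(σ−1)(2σ+φ−1)]`.  Then (a) `μ_p` is strictly decreasing on
`(1, 1/φ)`, with derivative `σ(2σ−1)(X²−1)φ(φ²−1)/{(σ−1)[(σ−1)(X²+1)φ − 2σX + Xφ² + X]²} < 0`
at each `X` there; (b) `μ_p(1) = μ_d` and `μ_p(X) → 0` as `X → (1/φ)⁻`; hence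
(c) `0 < μ_p(X) < μ_d` for every `X ∈ (1, 1/φ)`. -/
theorem stmt_17 (σ φ : ℝ) (hσ : 1 < σ) (hφ : φ ∈ Set.Ioo (0 : ℝ) 1)
    (μp : ℝ → ℝ)
    (hμp : μp = fun X : ℝ =>
      (2 * σ - 1) * (X - φ) * (1 - X * φ) /
        ((σ - 1) * ((2 * σ - φ ^ 2 - 1) * X - (σ - 1) * φ * (X ^ 2 + 1))))
    (μd : ℝ) (hμd : μd = (2 * σ - 1) * (1 - φ) / ((σ - 1) * (2 * σ + φ - 1))) :
    (StrictAntiOn μp (Set.Ioo (1 : ℝ) (1 / φ)) ∧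
      ∀ X ∈ Set.Ioo (1 : ℝ) (1 / φ),
        HasDerivAt μp
          (σ * (2 * σ - 1) * (X ^ 2 - 1) * φ * (φ ^ 2 - 1) /
            ((σ - 1) * ((σ - 1) * (X ^ 2 + 1) * φ - 2 * σ * X + X * φ ^ 2 + X) ^ 2)) X ∧
        σ * (2 * σ - 1) * (X ^ 2 - 1) * φ * (φ ^ 2 - 1) /
            ((σ - 1) * ((σ - 1) * (X ^ 2 + 1) * φ - 2 * σ * X + X * φ ^ 2 + X) ^ 2) < 0) ∧
    (μp 1 = μd ∧ Tendsto μp (𝓝[<] (1 / φ)) (𝓝 0)) ∧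
    (∀ X ∈ Set.Ioo (1 : ℝ) (1 / φ), 0 < μp X ∧ μp X < μd) := by
  obtain ⟨hφ0, hφ1⟩ := hφ
  have hσ1 : (0:ℝ) < σ - 1 := by linarith
  have h1φ : (1:ℝ) < 1 / φ := by rw [lt_div_iff₀ hφ0]; linarith
  -- positivity of the inner denominator on [1, 1/φ)
  have hd : ∀ X : ℝ, 1 ≤ X → X < 1 / φ →
      0 < (2 * σ - φ ^ 2 - 1) * X - (σ - 1) * φ * (X ^ 2 + 1) := by
    intro X hX hX2
    have hXφ : X * φ < 1 := (lt_div_iff₀ hφ0).1 hX2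
    have hXpos : (0:ℝ) < X := by linarith
    nlinarith [mul_pos (mul_pos (by linarith : (0:ℝ) < σ) hXpos)
        (by nlinarith : (0:ℝ) < 1 - φ * X),
      mul_pos (by linarith : (0:ℝ) < X - φ)
        (by nlinarith : (0:ℝ) < σ - 1 + X * φ)]
  -- key: derivative plus negativity
  have hkey : ∀ X ∈ Set.Ioo (1 : ℝ) (1 / φ),
      HasDerivAt μp
        (σ * (2 * σ - 1) * (X ^ 2 - 1) * φ * (φ ^ 2 - 1) /
          ((σ - 1) * ((σ - 1) * (X ^ 2 + 1) * φ - 2 * σ * X + X * φ ^ 2 + X) ^ 2)) X ∧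
      σ * (2 * σ - 1) * (X ^ 2 - 1) * φ * (φ ^ 2 - 1) /
          ((σ - 1) * ((σ - 1) * (X ^ 2 + 1) * φ - 2 * σ * X + X * φ ^ 2 + X) ^ 2) < 0 := by
    intro X hX
    have hdX := hd X hX.1.le hX.2
    have hE : (σ - 1) * (X ^ 2 + 1) * φ - 2 * σ * X + X * φ ^ 2 + X ≠ 0 := by
      intro h
      apply absurd hdX
      push_neg
      nlinarith [h]
    have hE2 : 0 < ((σ - 1) * (X ^ 2 + 1) * φ - 2 * σ * X + X * φ ^ 2 + X) ^ 2 :=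
      pow_two_pos_of_ne_zero hE
    have hDne : (σ - 1) * ((2 * σ - φ ^ 2 - 1) * X - (σ - 1) * φ * (X ^ 2 + 1)) ≠ 0 :=
      (mul_pos hσ1 hdX).ne'
    constructor
    · have h1 : HasDerivAt (fun X : ℝ => (2 * σ - 1) * (X - φ)) (2 * σ - 1) X := by
        simpa using ((hasDerivAt_id X).sub_const φ).const_mul (2 * σ - 1)
      have h2 : HasDerivAt (fun X : ℝ => 1 - X * φ) (-φ) X := by
        simpa using ((hasDerivAt_id X).mul_const φ).const_sub 1
      have hg := h1.mul h2
      have h3 : HasDerivAt (fun X : ℝ => (2 * σ - φ ^ 2 - 1) * X) (2 * σ - φ ^ 2 - 1) X := by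
        simpa using (hasDerivAt_id X).const_mul (2 * σ - φ ^ 2 - 1)
      have h4 : HasDerivAt (fun X : ℝ => (σ - 1) * φ * (X ^ 2 + 1)) ((σ - 1) * φ * (2 * X)) X := by
        simpa using ((hasDerivAt_pow 2 X).add_const 1).const_mul ((σ - 1) * φ)
      have hD := (h3.sub h4).const_mul (σ - 1)
      have := hg.div hD hDne
      rw [hμp]
      refine this.congr_deriv ?_
      simp only [Pi.mul_apply, Pi.sub_apply]
      rw [div_eq_div_iff (pow_ne_zero 2 hDne) (mul_ne_zero hσ1.ne' hE2.ne')]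
      ring
    · apply div_neg_of_neg_of_pos
      · nlinarith [mul_pos (mul_pos (mul_pos (mul_pos (by linarith : (0:ℝ) < σ)
          (by linarith : (0:ℝ) < 2 * σ - 1)) (by nlinarith [hX.1] : (0:ℝ) < X ^ 2 - 1)) hφ0)
          (by nlinarith : (0:ℝ) < 1 - φ ^ 2)]
      · positivity
  -- continuity where the denominator is nonzero
  have hcont : ∀ X : ℝ, (2 * σ - φ ^ 2 - 1) * X - (σ - 1) * φ * (X ^ 2 + 1) ≠ 0 →
      ContinuousAt μp X := by
    intro X hX
    rw [hμp]
    exact ContinuousAt.div (by fun_prop) (by fun_prop) (mul_ne_zero hσ1.ne' hX)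
  -- strict antitonicity on Ico
  have hanti : StrictAntiOn μp (Set.Ico (1 : ℝ) (1 / φ)) := by
    apply strictAntiOn_of_deriv_neg (convex_Ico _ _)
    · intro x hx
      exact (hcont x (hd x hx.1 hx.2).ne').continuousWithinAt
    · rw [interior_Ico]
      intro x hx
      obtain ⟨h1, h2⟩ := hkey x hx
      rw [h1.deriv]
      exact h2
  -- μp 1 = μd
  have hval1 : μp 1 = μd := by
    have hA : (σ - 1) * ((2 * σ - φ ^ 2 - 1) * 1 - (σ - 1) * φ * (1 ^ 2 + 1)) ≠ 0 :=
      (mul_pos hσ1 (hd 1 le_rfl h1φ)).ne'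
    have hB : (σ - 1) * (2 * σ + φ - 1) ≠ 0 :=
      (mul_pos hσ1 (by linarith)).ne'
    rw [hμp, hμd]
    simp only
    rw [div_eq_div_iff hA hB]
    ring
  -- tendsto 0
  have hdφ : (2 * σ - φ ^ 2 - 1) * (1 / φ) - (σ - 1) * φ * ((1 / φ) ^ 2 + 1) ≠ 0 := by
    have : (2 * σ - φ ^ 2 - 1) * (1 / φ) - (σ - 1) * φ * ((1 / φ) ^ 2 + 1)
        = σ * (1 - φ ^ 2) / φ := by
      field_simp
      ring
    rw [this]
    exact (div_pos (mul_pos (by linarith) (by nlinarith)) hφ0).ne'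
  have h0 : μp (1 / φ) = 0 := by
    rw [hμp]
    simp only
    have h : (1:ℝ) - 1 / φ * φ = 0 := by field_simp; ring
    rw [h, mul_zero, zero_div]
  have htend : Tendsto μp (𝓝[<] (1 / φ)) (𝓝 0) := by
    have h := ((hcont (1 / φ) hdφ).tendsto.mono_left
      (nhdsWithin_le_nhds : 𝓝[<] (1 / φ) ≤ 𝓝 (1 / φ)))
    rwa [h0] at h
  refine ⟨⟨hanti.mono Set.Ioo_subset_Ico_self, hkey⟩, ⟨hval1, htend⟩, ?_⟩
  intro X hX
  constructor
  · rw [hμp]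
    have hXφ : X * φ < 1 := (lt_div_iff₀ hφ0).1 hX.2
    exact div_pos (mul_pos (mul_pos (by linarith) (by linarith [hX.1])) (by linarith))
      (mul_pos hσ1 (hd X hX.1.le hX.2))
  · have := hanti ⟨le_rfl, h1φ⟩ ⟨hX.1.le, hX.2⟩ hX.1
    rwa [hval1] at this
end

section
/- Let 0 < μ < 1 and σ ∈ (2, (μ+1)/μ), and set φ_b = (2σ−1)·[μ(σ−1) − 1] / [−(μ+2)σ + μ + 1]. Then: (a) φ_b ∈ (0,1); and (b) 16·(σ−2)·(2σ−3)·(1−φ_b)³·((1+φ_b)/2)^{1/(σ−1)} / [(σ−1)³·(1+φ_b)³] − 32μ < 0. (Under Logit preferences with θ = 0, the third derivative ∂³ΔV/∂h³ at the bifurcation point (1/2, φ_b) is negative, so the pitchfork bifurcation in the freeness of trade φ is supercritical.) -/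
/-- let `0 < μ < 1`, `σ ∈ (2, (μ+1)/μ)` and
`φ_b = (2σ−1)[μ(σ−1) − 1]/[−(μ+2)σ + μ + 1]`.  Then (a) `φ_b ∈ (0,1)`, and
(b) `16(σ−2)(2σ−3)(1−φ_b)³((1+φ_b)/2)^{1/(σ−1)}/[(σ−1)³(1+φ_b)³] − 32μ < 0`. -/
theorem stmt_19 (μ σ : ℝ) (hμ0 : 0 < μ) (hμ1 : μ < 1)
    (hσ : σ ∈ Set.Ioo (2 : ℝ) ((μ + 1) / μ))
    (φb : ℝ)
    (hφb : φb = (2 * σ - 1) * (μ * (σ - 1) - 1) / (-(μ + 2) * σ + μ + 1)) :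
    φb ∈ Set.Ioo (0 : ℝ) 1 ∧
    16 * (σ - 2) * (2 * σ - 3) * (1 - φb) ^ 3 * ((1 + φb) / 2) ^ (1 / (σ - 1)) /
        ((σ - 1) ^ 3 * (1 + φb) ^ 3) - 32 * μ < 0 := by
  obtain ⟨hσ2, hσμ⟩ := hσ
  have hm : μ * (σ - 1) < 1 := by
    have := (lt_div_iff₀ hμ0).mp hσμ
    nlinarith
  have hm0 : 0 < μ * (σ - 1) := by nlinarith
  have hD : -(μ + 2) * σ + μ + 1 < 0 := by nlinarith
  have hDne : -(μ + 2) * σ + μ + 1 ≠ 0 := ne_of_lt hD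
  have hN : (2 * σ - 1) * (μ * (σ - 1) - 1) < 0 := by nlinarith
  have hx0 : 0 < φb := by
    rw [hφb]
    exact div_pos_of_neg_of_neg hN hD
  have h' : φb * (-(μ + 2) * σ + μ + 1) = (2 * σ - 1) * (μ * (σ - 1) - 1) :=
    (eq_div_iff hDne).mp hφb
  have hrel : (μ * (σ - 1) + 2 * σ - 1) * φb = (2 * σ - 1) * (1 - μ * (σ - 1)) := by
    linear_combination -h'
  have hT : 0 < μ * (σ - 1) + 2 * σ - 1 := by nlinarith
  have hTne : μ * (σ - 1) + 2 * σ - 1 ≠ 0 := ne_of_gt hT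
  have hx1 : φb < 1 := by nlinarith [hrel]
  refine ⟨⟨hx0, hx1⟩, ?_⟩
  have hC0 : (0:ℝ) < ((1 + φb) / 2) ^ (1 / (σ - 1)) :=
    Real.rpow_pos_of_pos (by linarith) _
  have hC1 : ((1 + φb) / 2) ^ (1 / (σ - 1)) < 1 :=
    Real.rpow_lt_one (by linarith) (by linarith) (div_pos one_pos (by linarith))
  have e1 : 1 - φb = 2 * σ * (μ * (σ - 1)) / (μ * (σ - 1) + 2 * σ - 1) := by
    rw [eq_div_iff hTne]; linear_combination -hrel
  have e2 : 1 + φb =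
      2 * (2 * σ - 1 - μ * (σ - 1) ^ 2) / (μ * (σ - 1) + 2 * σ - 1) := by
    rw [eq_div_iff hTne]; linear_combination hrel
  have hσK : σ < 2 * σ - 1 - μ * (σ - 1) ^ 2 := by nlinarith
  have hσpos : (0:ℝ) < σ := by linarith
  have hK0 : (0:ℝ) < 2 * σ - 1 - μ * (σ - 1) ^ 2 := by linarith
  have hK3 : σ ^ 3 < (2 * σ - 1 - μ * (σ - 1) ^ 2) ^ 3 :=
    pow_lt_pow_left₀ hσK (le_of_lt hσpos) (by norm_num)
  have hm2 : μ ^ 2 * (σ - 1) ^ 2 < 1 := by nlinarith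
  have hA : μ ^ 2 * ((σ - 2) * (2 * σ - 3)) < 2 := by nlinarith [sq_nonneg μ]
  have hσ3 : (0:ℝ) < σ ^ 3 := by positivity
  -- key polynomial inequality
  have key : (σ - 2) * (2 * σ - 3) * (2 * σ * (μ * (σ - 1))) ^ 3 <
      2 * μ * (σ - 1) ^ 3 * (2 * (2 * σ - 1 - μ * (σ - 1) ^ 2)) ^ 3 := by
    have h1 : σ ^ 3 * (μ ^ 2 * ((σ - 2) * (2 * σ - 3))) < σ ^ 3 * 2 :=
      (mul_lt_mul_iff_right₀ hσ3).mpr hA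
    have h2 : σ ^ 3 * (μ ^ 2 * ((σ - 2) * (2 * σ - 3))) <
        2 * (2 * σ - 1 - μ * (σ - 1) ^ 2) ^ 3 := by nlinarith
    have hc : (0:ℝ) < 8 * μ * (σ - 1) ^ 3 :=
      mul_pos (by positivity) (pow_pos (by linarith) 3)
    have h3 := (mul_lt_mul_iff_right₀ hc).mpr h2
    calc (σ - 2) * (2 * σ - 3) * (2 * σ * (μ * (σ - 1))) ^ 3
        = 8 * μ * (σ - 1) ^ 3 * (σ ^ 3 * (μ ^ 2 * ((σ - 2) * (2 * σ - 3)))) := by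
          ring
      _ < 8 * μ * (σ - 1) ^ 3 * (2 * (2 * σ - 1 - μ * (σ - 1) ^ 2) ^ 3) := h3
      _ = 2 * μ * (σ - 1) ^ 3 * (2 * (2 * σ - 1 - μ * (σ - 1) ^ 2)) ^ 3 := by ring
  -- inequality without the rpow factor
  have key2 : (σ - 2) * (2 * σ - 3) * (1 - φb) ^ 3 <
      2 * μ * (σ - 1) ^ 3 * (1 + φb) ^ 3 := by
    have hT3 : (0:ℝ) < (μ * (σ - 1) + 2 * σ - 1) ^ 3 := pow_pos hT 3
    rw [e1, e2, div_pow, div_pow, ← mul_div_assoc, ← mul_div_assoc,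
        div_lt_div_iff₀ hT3 hT3]
    exact (mul_lt_mul_iff_left₀ hT3).mpr key
  -- assemble
  have hden : (0:ℝ) < (σ - 1) ^ 3 * (1 + φb) ^ 3 :=
    mul_pos (pow_pos (by linarith) 3) (pow_pos (by linarith) 3)
  rw [sub_neg, div_lt_iff₀ hden]
  have hφb1 : (0:ℝ) < 1 - φb := by linarith
  have hP3 : (0:ℝ) < 16 * (σ - 2) * (2 * σ - 3) * (1 - φb) ^ 3 :=
    mul_pos (mul_pos (mul_pos (by norm_num) (by linarith)) (by linarith)) (pow_pos hφb1 3)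
  calc 16 * (σ - 2) * (2 * σ - 3) * (1 - φb) ^ 3 * (((1 + φb) / 2) ^ (1 / (σ - 1)))
      < 16 * (σ - 2) * (2 * σ - 3) * (1 - φb) ^ 3 * 1 :=
        (mul_lt_mul_iff_right₀ hP3).mpr hC1
    _ = 16 * ((σ - 2) * (2 * σ - 3) * (1 - φb) ^ 3) := by ring
    _ < 16 * (2 * μ * (σ - 1) ^ 3 * (1 + φb) ^ 3) := by linarith
    _ = 32 * μ * ((σ - 1) ^ 3 * (1 + φb) ^ 3) := by ring
end
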